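/- Let d ≥ 1, ε₁ ∈ (0,1), t* > 0, and let T : ℝ^d × [0,t*] → ℝ satisfy (1+t)^{d/2} ‖T(·,t)‖_{L^∞(ℝ^d)} + ‖T(·,t)‖_{L¹(ℝ^d)} ≤ ε₁ for all t ∈ [0,t*]. Then there exists a constant C = C(d) such that for all t ∈ [0,t*]: ‖r(T(·,t))‖_{L^∞(ℝ^d)} ≤ C ε₁^{11} (1+t)^{−11d/2} and ‖r(T(·,t))‖_{L¹(ℝ^d)} ≤ C ε₁^{11} (1+t)^{−5d}. -/

import Mathlib

open MeasureTheory Real Set Filter ENNReal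

noncomputable section

/-- Euclidean space `ℝ^d`. -/
abbrev Rd (d : ℕ) := EuclideanSpace ℝ (Fin d)

/-- The Arrhenius reaction rate: `r(T) = exp(-1/T)` for `T > 0`, `0` otherwise. -/
noncomputable def rrate (T : ℝ) : ℝ := if 0 < T then Real.exp (-1 / T) else 0

/-- The heat semigroup `e^{tΔ}φ`, given by convolution with the heat kernel
`Φ_t(x) = (4πt)^{-d/2} exp(-|x|²/(4t))` for `t ≠ 0`, and the identity at `t = 0`. -/
noncomputable def heatConv (d : ℕ) (t : ℝ) (φ : Rd d → ℝ) : Rd d → ℝ :=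
  if t = 0 then φ
  else fun x => ∫ y : Rd d,
    (4 * Real.pi * t) ^ (-(d : ℝ) / 2) * Real.exp (-‖x - y‖ ^ 2 / (4 * t)) * φ y

/-- The Duhamel representative of the temperature at time `t`:
`e^{-λt} e^{tΔ} T₀ + ∫₀ᵗ e^{-λ(t-τ)} e^{(t-τ)Δ}[Y(·,τ) r(T(·,τ))] dτ`. -/
noncomputable def duhamelRep (d : ℕ) (lam : ℝ) (T0 : Rd d → ℝ)
    (T Y : Rd d → ℝ → ℝ) (t : ℝ) (x : Rd d) : ℝ :=
  Real.exp (-lam * t) * heatConv d t T0 x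
    + ∫ τ in Set.Ioc (0 : ℝ) t,
        Real.exp (-lam * (t - τ)) *
          heatConv d (t - τ) (fun y => Y y τ * rrate (T y τ)) x

/-- Continuity of the curve `t ↦ T(·,t)` into `L^p(ℝ^d)`, on the time set `I`. -/
def ContinuousIntoLp (d : ℕ) (p : ℝ≥0∞) (I : Set ℝ) (T : Rd d → ℝ → ℝ) : Prop :=
  ∀ t₀ ∈ I, Filter.Tendsto (fun t => eLpNorm (fun x => T x t - T x t₀) p volume)
    (nhdsWithin t₀ I) (nhds 0)

/-- A mild solution `(T, Y)` of the wildfire reaction-diffusion system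
`T_t = (Δ - λ)T + Y r(T)`, `Y_t = -β Y r(T)` with data `(T₀, Y₀)`, on the time set `I`:
the temperature satisfies the Duhamel formula (a.e. in `x`) and the fuel satisfies
`Y(x,t) = Y₀(x) exp(-β ∫₀ᵗ r(T(x,σ)) dσ)`, with both curves continuous into `L^∞`. -/
structure IsMildSolutionOn (d : ℕ) (lam beta : ℝ) (I : Set ℝ)
    (T0 Y0 : Rd d → ℝ) (T Y : Rd d → ℝ → ℝ) : Prop where
  meas_T0 : Measurable T0
  meas_Y0 : Measurable Y0
  bdd_T0 : eLpNorm T0 ⊤ volume < ⊤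
  bdd_Y0 : eLpNorm Y0 ⊤ volume < ⊤
  meas_T : ∀ t ∈ I, Measurable fun x => T x t
  meas_Y : ∀ t ∈ I, Measurable fun x => Y x t
  cont_T : ContinuousIntoLp d ⊤ I T
  cont_Y : ContinuousIntoLp d ⊤ I Y
  duhamel : ∀ t ∈ I, (fun x => T x t) =ᵐ[volume] duhamelRep d lam T0 T Y t
  fuel : ∀ x, ∀ t ∈ I,
    Y x t = Y0 x * Real.exp (-beta * ∫ σ in Set.Ioc (0 : ℝ) t, rrate (T x σ))

/-- The `X_{t*}`-norm: `sup_{t ∈ I} [(1+t)^{d/2} ‖T(·,t)‖_{L^∞} + ‖T(·,t)‖_{L¹}]`. -/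
noncomputable def XnormOn (d : ℕ) (I : Set ℝ) (T : Rd d → ℝ → ℝ) : ℝ≥0∞ :=
  ⨆ t ∈ I, (ENNReal.ofReal ((1 + t) ^ ((d : ℝ) / 2)) * eLpNorm (fun x => T x t) ⊤ volume
    + eLpNorm (fun x => T x t) 1 volume)

end

lemma rrate_le_pow (u : ℝ) : rrate u ≤ 39916800 * |u| ^ 11 := by
  unfold rrate
  split_ifs with hu
  · have hx : (0:ℝ) ≤ 1 / u := by positivity
    have hsum := Real.sum_le_exp_of_nonneg hx 12
    have hterm : (1 / u) ^ 11 / (Nat.factorial 11 : ℝ)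
        ≤ ∑ i ∈ Finset.range 12, (1 / u) ^ i / (Nat.factorial i : ℝ) := by
      refine Finset.single_le_sum (f := fun i => (1 / u) ^ i / (Nat.factorial i : ℝ))
        (fun i _ => by positivity) (by norm_num)
    have h1 : (1 / u) ^ 11 / 39916800 ≤ Real.exp (1 / u) := by
      have hfac : (Nat.factorial 11 : ℝ) = 39916800 := by norm_num [Nat.factorial]
      have := hterm.trans hsum
      rw [hfac] at this
      linarith
    have hposE : (0:ℝ) < (1 / u) ^ 11 / 39916800 := by positivity
    have h2 : Real.exp (-1 / u) = (Real.exp (1 / u))⁻¹ := by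
      rw [← Real.exp_neg]; ring_nf
    rw [h2]
    have h3 : (Real.exp (1 / u))⁻¹ ≤ ((1 / u) ^ 11 / 39916800)⁻¹ :=
      inv_anti₀ hposE h1
    refine h3.trans (le_of_eq ?_)
    rw [abs_of_pos hu]
    field_simp
  · positivity

lemma rrate_nonneg (u : ℝ) : 0 ≤ rrate u := by
  unfold rrate; split_ifs <;> positivity

/-- Reaction-rate decay estimates: for `d ≥ 1` there is `C = C(d)`
such that whenever `ε₁ ∈ (0,1)`, `t* > 0` and `T : ℝ^d × [0,t*] → ℝ` satisfies
`(1+t)^{d/2} ‖T(·,t)‖_{L^∞} + ‖T(·,t)‖_{L¹} ≤ ε₁` for all `t ∈ [0,t*]`, then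
`‖r(T(·,t))‖_{L^∞} ≤ C ε₁¹¹ (1+t)^{-11d/2}` and
`‖r(T(·,t))‖_{L¹} ≤ C ε₁¹¹ (1+t)^{-5d}` for all `t ∈ [0,t*]`. -/
theorem reaction_rate_decay_estimates (d : ℕ) (hd : 1 ≤ d) :
    ∃ C : ℝ, 0 < C ∧
      ∀ (ε₁ tstar : ℝ), ε₁ ∈ Set.Ioo (0 : ℝ) 1 → 0 < tstar →
      ∀ (T : Rd d → ℝ → ℝ),
        (∀ t ∈ Set.Icc (0 : ℝ) tstar,
          ENNReal.ofReal ((1 + t) ^ ((d : ℝ) / 2)) * eLpNorm (fun x => T x t) ⊤ volume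
            + eLpNorm (fun x => T x t) 1 volume ≤ ENNReal.ofReal ε₁) →
        ∀ t ∈ Set.Icc (0 : ℝ) tstar,
          eLpNorm (fun x => rrate (T x t)) ⊤ volume
              ≤ ENNReal.ofReal (C * ε₁ ^ 11 * (1 + t) ^ (-(11 * (d : ℝ)) / 2)) ∧
          eLpNorm (fun x => rrate (T x t)) 1 volume
              ≤ ENNReal.ofReal (C * ε₁ ^ 11 * (1 + t) ^ (-(5 * (d : ℝ)))) := by
  refine ⟨39916800, by norm_num, ?_⟩
  rintro ε₁ tstar ⟨hε0, hε1⟩ htstar T hT t ht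
  have ht0 : (0:ℝ) ≤ t := ht.1
  have hpos : (0:ℝ) < 1 + t := by linarith
  have hP : (0:ℝ) < (1 + t) ^ ((d : ℝ) / 2) := Real.rpow_pos_of_pos hpos _
  set B : ℝ := ε₁ * (1 + t) ^ (-((d : ℝ) / 2)) with hBdef
  have hBpos : 0 < B := mul_pos hε0 (Real.rpow_pos_of_pos hpos _)
  have h := hT t ht
  have h1 : ENNReal.ofReal ((1 + t) ^ ((d : ℝ) / 2)) * eLpNorm (fun x => T x t) ⊤ volume
      ≤ ENNReal.ofReal ε₁ := le_trans le_self_add h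
  have hL1 : eLpNorm (fun x => T x t) 1 volume ≤ ENNReal.ofReal ε₁ :=
    le_trans le_add_self h
  have hInf : eLpNorm (fun x => T x t) ⊤ volume ≤ ENNReal.ofReal B := by
    have hne : ENNReal.ofReal ((1 + t) ^ ((d : ℝ) / 2)) ≠ 0 := by
      simp [ENNReal.ofReal_eq_zero, not_le, hP]
    have hne' : ENNReal.ofReal ((1 + t) ^ ((d : ℝ) / 2)) ≠ ⊤ := ENNReal.ofReal_ne_top
    have h1' : eLpNorm (fun x => T x t) ⊤ volume
        * ENNReal.ofReal ((1 + t) ^ ((d : ℝ) / 2)) ≤ ENNReal.ofReal ε₁ := by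
      rw [mul_comm]; exact h1
    have hdiv := (ENNReal.le_div_iff_mul_le (Or.inl hne) (Or.inl hne')).2 h1' 
    refine hdiv.trans (le_of_eq ?_)
    rw [← ENNReal.ofReal_div_of_pos hP]
    congr 1
    rw [hBdef, Real.rpow_neg hpos.le, div_eq_mul_inv]
  have hae : ∀ᵐ x ∂(volume : MeasureTheory.Measure (Rd d)), |T x t| ≤ B := by
    have hle := MeasureTheory.enorm_ae_le_eLpNormEssSup (fun x => T x t) volume
    filter_upwards [hle] with x hx
    have hx' : (‖T x t‖₊ : ℝ≥0∞) ≤ ENNReal.ofReal B := by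
      refine hx.trans ?_
      rwa [← MeasureTheory.eLpNorm_exponent_top]
    rw [← enorm_eq_nnnorm, ← ofReal_norm] at hx'
    have := (ENNReal.ofReal_le_ofReal_iff hBpos.le).1 hx'
    simpa [Real.norm_eq_abs] using this
  have hpt : ∀ᵐ x ∂(volume : MeasureTheory.Measure (Rd d)),
      rrate (T x t) ≤ 39916800 * B ^ 10 * |T x t| := by
    filter_upwards [hae] with x hx
    calc rrate (T x t) ≤ 39916800 * |T x t| ^ 11 := rrate_le_pow _
      _ = 39916800 * |T x t| ^ 10 * |T x t| := by ring
      _ ≤ 39916800 * B ^ 10 * |T x t| := by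
          have h10 : |T x t| ^ 10 ≤ B ^ 10 := pow_le_pow_left₀ (abs_nonneg _) hx 10
          have habs : (0:ℝ) ≤ |T x t| := abs_nonneg _
          nlinarith
  constructor
  · have hb : ∀ᵐ x ∂(volume : MeasureTheory.Measure (Rd d)),
        ‖rrate (T x t)‖ ≤ 39916800 * B ^ 11 := by
      filter_upwards [hae] with x hx
      rw [Real.norm_eq_abs, abs_of_nonneg (rrate_nonneg _)]
      calc rrate (T x t) ≤ 39916800 * |T x t| ^ 11 := rrate_le_pow _
        _ ≤ 39916800 * B ^ 11 := by
            have h11 := pow_le_pow_left₀ (abs_nonneg _) hx 11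
            linarith
    have hbd := MeasureTheory.eLpNormEssSup_le_of_ae_bound hb
    rw [MeasureTheory.eLpNorm_exponent_top]
    refine hbd.trans (le_of_eq ?_)
    congr 1
    rw [hBdef, mul_pow, ← Real.rpow_natCast ((1 + t) ^ (-((d : ℝ) / 2))) 11,
      ← Real.rpow_mul hpos.le]
    rw [show -((d : ℝ) / 2) * ((11:ℕ) : ℝ) = -(11 * (d : ℝ)) / 2 by push_cast; ring]
    ring
  · have hmono : ∀ᵐ x ∂(volume : MeasureTheory.Measure (Rd d)),
        ‖rrate (T x t)‖ ≤ ‖(39916800 * B ^ 10) • (fun x => T x t) x‖ := by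
      filter_upwards [hpt] with x hx
      rw [Real.norm_eq_abs, abs_of_nonneg (rrate_nonneg _)]
      rw [norm_smul, Real.norm_eq_abs, Real.norm_eq_abs,
        abs_of_nonneg (by positivity : (0:ℝ) ≤ 39916800 * B ^ 10)]
      exact hx
    calc eLpNorm (fun x => rrate (T x t)) 1 volume
        ≤ eLpNorm ((39916800 * B ^ 10) • (fun x => T x t)) 1 volume :=
          MeasureTheory.eLpNorm_mono_ae hmono
      _ = ‖(39916800 * B ^ 10 : ℝ)‖₊ * eLpNorm (fun x => T x t) 1 volume :=
          MeasureTheory.eLpNorm_const_smul _ _ _ _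
      _ ≤ ENNReal.ofReal (39916800 * B ^ 10) * ENNReal.ofReal ε₁ := by
          refine mul_le_mul' (le_of_eq ?_) hL1
          rw [← enorm_eq_nnnorm, ← ofReal_norm,
            Real.norm_of_nonneg (by positivity : (0:ℝ) ≤ 39916800 * B ^ 10)]
      _ = ENNReal.ofReal (39916800 * ε₁ ^ 11 * (1 + t) ^ (-(5 * (d : ℝ)))) := by
          rw [← ENNReal.ofReal_mul (by positivity)]
          congr 1
          rw [hBdef, mul_pow, ← Real.rpow_natCast ((1 + t) ^ (-((d : ℝ) / 2))) 10,
            ← Real.rpow_mul hpos.le]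
          rw [show -((d : ℝ) / 2) * ((10:ℕ) : ℝ) = -(5 * (d : ℝ)) by push_cast; ring]
          ring
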